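/- Let u : [0,∞) → ℝ^d be a piecewise constant function defined by u(t) = uₙ for t ∈ [tₙ, tₙ₊₁), where t₀ = 0, tₙ = Σ_{i<n} a(i), and let xₙ₊₁ = xₙ + a(n)(uₙ + Mₙ₊₁) with partial noise sums ζₙ = Σ_{m<n} a(m)M_{m+1}. Let x̄ be the piecewise linear interpolation of (xₙ) on the grid (tₙ), and for s ≥ 0 let x^s(t) := x̄(s) + ∫₀ᵗ u(s+z) dz. If (ζₙ) converges, then for every T > 0, sup_{t∈[0,T]} ‖x̄(s+t) − x^s(t)‖ → 0 as s → ∞. -/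

import Mathlib

open Filter Topology Set

theorem stmt_9 {d : ℕ}
    (a : ℕ → ℝ) (ha_pos : ∀ n, 0 < a n) (ha_le : ∀ n, a n ≤ 1)
    (ha_div : Tendsto (fun n => ∑ i ∈ Finset.range n, a i) atTop atTop)
    (t : ℕ → ℝ) (ht : ∀ n, t n = ∑ i ∈ Finset.range n, a i)
    (useq : ℕ → EuclideanSpace ℝ (Fin d))
    (u : ℝ → EuclideanSpace ℝ (Fin d))
    (hu : ∀ n, ∀ s ∈ Ico (t n) (t (n + 1)), u s = useq n)
    (M : ℕ → EuclideanSpace ℝ (Fin d))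
    (x : ℕ → EuclideanSpace ℝ (Fin d))
    (hx : ∀ n, x (n + 1) = x n + a n • (useq n + M (n + 1)))
    (hζ : ∃ L, Tendsto (fun n => ∑ m ∈ Finset.range n, a m • M (m + 1))
      atTop (𝓝 L))
    (xbar : ℝ → EuclideanSpace ℝ (Fin d))
    (hxbar_grid : ∀ n, xbar (t n) = x n)
    (hxbar_lin : ∀ n, ∀ s ∈ Icc (t n) (t (n + 1)),
      xbar s = x n + ((s - t n) / a n) • (x (n + 1) - x n)) :
    ∀ T > (0:ℝ), ∀ ε > (0:ℝ), ∃ S : ℝ, ∀ s ≥ S, ∀ τ ∈ Icc (0:ℝ) T,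
      ‖xbar (s + τ) - (xbar s + ∫ z in (0:ℝ)..τ, u (s + z))‖ < ε := by
  intro T hT ε hε
  obtain ⟨L, hL⟩ := hζ
  set ζ : ℕ → EuclideanSpace ℝ (Fin d) :=
    fun n => ∑ m ∈ Finset.range n, a m • M (m + 1) with hζdef
  -- basic facts about t
  have ht0 : t 0 = 0 := by simp [ht]
  have htsucc : ∀ n, t (n + 1) = t n + a n := by
    intro n; simp [ht, Finset.sum_range_succ]
  have htmono : StrictMono t :=
    strictMono_nat_of_lt_succ (fun n => by rw [htsucc]; linarith [ha_pos n])
  have httop : Tendsto t atTop atTop := by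
    have : t = fun n => ∑ i ∈ Finset.range n, a i := funext ht
    rw [this]; exact ha_div
  -- formula for x n
  have hxform : ∀ n, x n = x 0 + (∑ m ∈ Finset.range n, a m • useq m) + ζ n := by
    intro n
    induction n with
    | zero => simp [hζdef]
    | succ n ih =>
      rw [hx n, ih, hζdef]
      simp only [Finset.sum_range_succ, smul_add]
      abel
  -- u equals useq n a.e. on [t n, r]
  have huae : ∀ n r, t n ≤ r → r ≤ t (n + 1) →
      ∀ᵐ z, z ∈ Set.uIoc (t n) r → u z = useq n := by
    intro n r h1 h2
    have h0 : ∀ᵐ z : ℝ, z ≠ r := by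
      rw [MeasureTheory.ae_iff]
      simpa using MeasureTheory.measure_singleton r
    filter_upwards [h0] with z hz hmem
    rw [uIoc_of_le h1] at hmem
    exact hu n z ⟨hmem.1.le, lt_of_lt_of_le (lt_of_le_of_ne hmem.2 hz) h2⟩
  -- integrability on [t n, r]
  have hInt1 : ∀ n r, t n ≤ r → r ≤ t (n + 1) →
      IntervalIntegrable u MeasureTheory.volume (t n) r := by
    intro n r h1 h2
    rw [intervalIntegrable_iff]
    have hc : MeasureTheory.IntegrableOn (fun _ : ℝ => useq n) (Set.uIoc (t n) r)
        MeasureTheory.volume :=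
      MeasureTheory.integrableOn_const
        (by rw [uIoc_of_le h1]; exact measure_Ioc_lt_top.ne)
    exact hc.congr_fun_ae ((MeasureTheory.ae_restrict_iff' measurableSet_uIoc).2
      ((huae n r h1 h2).mono fun z h hz => (h hz).symm))
  -- value of integral on [t n, r]
  have hval : ∀ n r, t n ≤ r → r ≤ t (n + 1) →
      ∫ z in (t n)..r, u z = (r - t n) • useq n := by
    intro n r h1 h2
    rw [intervalIntegral.integral_congr_ae (huae n r h1 h2),
      intervalIntegral.integral_const]
  -- integral from 0 to t n
  have hIntTo : ∀ n, IntervalIntegrable u MeasureTheory.volume 0 (t n) ∧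
      ∫ z in (0:ℝ)..(t n), u z = ∑ m ∈ Finset.range n, a m • useq m := by
    intro n
    induction n with
    | zero => simp [ht0]
    | succ n ih =>
      have h1 := hInt1 n (t (n + 1)) (htmono n.lt_succ_self).le le_rfl
      have hint : IntervalIntegrable u MeasureTheory.volume 0 (t (n + 1)) := by
        have := ih.1.trans h1
        exact this
      refine ⟨hint, ?_⟩
      rw [← intervalIntegral.integral_add_adjacent_intervals ih.1 h1, ih.2,
        hval n (t (n + 1)) (htmono n.lt_succ_self).le le_rfl,
        Finset.sum_range_succ]
      congr 2
      rw [htsucc]; ring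
  -- find the interval containing r
  obtain ⟨N, hN⟩ := (Metric.tendsto_atTop.mp hL) (ε / 3) (by positivity)
  have hfind : ∀ r, t N ≤ r → ∃ n, N ≤ n ∧ t n ≤ r ∧ r ≤ t (n + 1) := by
    intro r hr
    have h0r : (0:ℝ) ≤ r := by
      rw [← ht0]; exact le_trans (htmono.monotone (Nat.zero_le N)) hr
    have hex : ∃ k, r < t k := (httop.eventually_gt_atTop r).exists
    obtain ⟨K, hK⟩ : ∃ K, Nat.find hex = K + 1 := by
      refine ⟨Nat.find hex - 1, ?_⟩
      have hne : Nat.find hex ≠ 0 := by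
        intro h
        have hs := Nat.find_spec hex
        rw [h, ht0] at hs
        linarith
      omega
    have hspec : r < t (K + 1) := hK ▸ Nat.find_spec hex
    have hKle : t K ≤ r := not_lt.1 (Nat.find_min hex (by omega))
    refine ⟨K, ?_, hKle, hspec.le⟩
    by_contra hc
    push_neg at hc
    have := htmono.monotone (show K + 1 ≤ N by omega)
    linarith
  -- the key deviation formula and bound
  have key : ∀ r, t N ≤ r →
      IntervalIntegrable u MeasureTheory.volume 0 r ∧
      ‖(xbar r - x 0 - ∫ z in (0:ℝ)..r, u z) - L‖ ≤ ε / 3 := by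
    intro r hr
    obtain ⟨n, hnN, h1, h2⟩ := hfind r hr
    have hint1 := hInt1 n r h1 h2
    have hint : IntervalIntegrable u MeasureTheory.volume 0 r :=
      (hIntTo n).1.trans hint1
    refine ⟨hint, ?_⟩
    -- compute the integral from 0 to r
    have hIval : ∫ z in (0:ℝ)..r, u z =
        (∑ m ∈ Finset.range n, a m • useq m) + (r - t n) • useq n := by
      rw [← intervalIntegral.integral_add_adjacent_intervals (hIntTo n).1 hint1,
        (hIntTo n).2, hval n r h1 h2]
    -- compute xbar r
    have hxbr : xbar r = x n + (r - t n) • (useq n + M (n + 1)) := by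
      rw [hxbar_lin n r ⟨h1, h2⟩, hx n]
      congr 1
      rw [add_sub_cancel_left, smul_smul, div_mul_cancel₀ _ (ha_pos n).ne']
    -- deviation formula
    have hD : xbar r - x 0 - ∫ z in (0:ℝ)..r, u z = ζ n + (r - t n) • M (n + 1) := by
      rw [hxbr, hIval, hxform n, smul_add]
      abel
    -- convex combination bound
    set c : ℝ := (r - t n) / a n with hc
    have hc0 : 0 ≤ c := div_nonneg (by linarith) (ha_pos n).le
    have hc1 : c ≤ 1 := by
      rw [div_le_one (ha_pos n)]
      have := htsucc n
      linarith
    have hconv : (xbar r - x 0 - ∫ z in (0:ℝ)..r, u z) - L =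
        (1 - c) • (ζ n - L) + c • (ζ (n + 1) - L) := by
      rw [hD]
      have hζs : ζ (n + 1) = ζ n + a n • M (n + 1) := by
        rw [hζdef]; simp [Finset.sum_range_succ]
      have hrc : (r - t n) • M (n + 1) = c • (a n • M (n + 1)) := by
        rw [smul_smul, hc, div_mul_cancel₀ _ (ha_pos n).ne']
      rw [hrc, hζs, sub_smul, one_smul, smul_sub, smul_sub, smul_add]
      abel
    rw [hconv]
    calc ‖(1 - c) • (ζ n - L) + c • (ζ (n + 1) - L)‖
        ≤ ‖(1 - c) • (ζ n - L)‖ + ‖c • (ζ (n + 1) - L)‖ := norm_add_le _ _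
      _ = (1 - c) * ‖ζ n - L‖ + c * ‖ζ (n + 1) - L‖ := by
          rw [norm_smul, norm_smul, Real.norm_of_nonneg (by linarith),
            Real.norm_of_nonneg hc0]
      _ ≤ (1 - c) * (ε / 3) + c * (ε / 3) := by
          have hb1 : ‖ζ n - L‖ ≤ ε / 3 := by
            have := hN n hnN
            rw [dist_eq_norm] at this
            linarith
          have hb2 : ‖ζ (n + 1) - L‖ ≤ ε / 3 := by
            have := hN (n + 1) (by omega)
            rw [dist_eq_norm] at this
            linarith
          gcongr <;> linarith
      _ = ε / 3 := by ring
  -- assemble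
  refine ⟨t N, fun s hs τ hτ => ?_⟩
  have hsτ : t N ≤ s + τ := by
    have := hτ.1
    linarith
  obtain ⟨hint_s, hbd_s⟩ := key s hs
  obtain ⟨hint_sτ, hbd_sτ⟩ := key (s + τ) hsτ
  have hcomp : (∫ z in (0:ℝ)..τ, u (s + z)) = ∫ z in s..(s + τ), u z := by
    simpa using intervalIntegral.integral_comp_add_left (a := (0:ℝ)) (b := τ) u s
  have hsplit : (∫ z in s..(s + τ), u z) =
      (∫ z in (0:ℝ)..(s + τ), u z) - ∫ z in (0:ℝ)..s, u z :=
    (intervalIntegral.integral_interval_sub_left hint_sτ hint_s).symm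
  have hre : xbar (s + τ) - (xbar s + ∫ z in (0:ℝ)..τ, u (s + z)) =
      ((xbar (s + τ) - x 0 - ∫ z in (0:ℝ)..(s + τ), u z) - L) -
      ((xbar s - x 0 - ∫ z in (0:ℝ)..s, u z) - L) := by
    rw [hcomp, hsplit]
    abel
  rw [hre]
  calc ‖_ - _‖ ≤ ‖(xbar (s + τ) - x 0 - ∫ z in (0:ℝ)..(s + τ), u z) - L‖ +
      ‖(xbar s - x 0 - ∫ z in (0:ℝ)..s, u z) - L‖ := norm_sub_le _ _
    _ ≤ ε / 3 + ε / 3 := add_le_add hbd_sτ hbd_s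
    _ < ε := by linarith
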